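/- Suppose the following finitary stable regularity holds: for all k, δ, ε, σ there is a bound N(k,δ,ε,σ) such that every (k,δ)-stable f : V × W → [0,1] on finite sets admits partitions V = V_0 ∪ … ∪ V_m, W = W_0 ∪ … ∪ W_n with m,n ≤ N, |V_0| ≤ ε|V_1|, |W_0| ≤ ε|W_1|, and each pair (V_i,W_j) for (i,j) ∈ [m]×[n] being (5δ+ε; σ(mn))-homogeneous. Then every (k,δ)-stable f : V × W → [0,1] admits, for any ε > 0 and σ : ℕ → (0,1), partitions V = V_0 ∪ V_1 ∪ … ∪ V_m and W = W_0 ∪ W_1 ∪ … ∪ W_n with m,n bounded in terms of k,δ,ε,σ, such that: (i) each (V_i,W_j), (i,j) ∈ [m]×[n], is (5δ+ε; σ(mn))-homogeneous; (ii) |V_i| = |V_j| for 1 ≤ i,j ≤ m and |W_i| = |W_j| for 1 ≤ i,j ≤ n; (iii) |V_0| ≤ ε|V| and |W_0| ≤ ε|W|. -/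

import Mathlib

open scoped Classical

/-- `f` is `(k,δ)`-stable. -/
def IsStable {V W : Type*} (k : ℕ) (δ : ℝ) (f : V → W → ℝ) : Prop :=
  ¬ ∃ (a : Fin k → V) (b : Fin k → W), ∀ i j : Fin k, i < j →
    δ ≤ |f (a i) (b j) - f (a j) (b i)|

/-- `P` is a partition of `α` into (possibly empty) pieces. -/
def IsPartition {α : Type*} {m : ℕ} (P : Fin m → Finset α) : Prop :=
  (∀ i j, i ≠ j → Disjoint (P i) (P j)) ∧ ∀ a : α, ∃ i, a ∈ P i

/-- The pair `(A,B)` is `(δ;γ,ε)`-homogeneous for `f`. -/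
def Homog {V W : Type*} (f : V → W → ℝ) (A : Finset V) (B : Finset W)
    (δ γ ε : ℝ) : Prop :=
  ∃ A' ⊆ A, ∃ B' ⊆ B,
    (1 - γ) * (A.card : ℝ) ≤ (A'.card : ℝ) ∧
    (1 - γ) * (B.card : ℝ) ≤ (B'.card : ℝ) ∧
    ∃ r ∈ Set.Icc (0:ℝ) 1, ∃ s ∈ Set.Icc (0:ℝ) 1,
      (∀ b ∈ B', (1 - ε) * (A.card : ℝ) ≤ ((A.filter fun a => |f a b - r| ≤ δ).card : ℝ)) ∧
      (∀ a ∈ A', (1 - ε) * (B.card : ℝ) ≤ ((B.filter fun b => |f a b - s| ≤ δ).card : ℝ))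


/-- Union of a list of finsets. -/
def UU {α : Type*} [DecidableEq α] (l : List (Finset α)) : Finset α :=
  l.foldr (· ∪ ·) ∅

lemma mem_UU {α : Type*} [DecidableEq α] {l : List (Finset α)} {a : α} :
    a ∈ UU l ↔ ∃ T ∈ l, a ∈ T := by
  induction l with
  | nil => simp [UU]
  | cons T l ih => simp [UU] at ih ⊢; rw [ih]

lemma disjoint_UU {α : Type*} [DecidableEq α] {l : List (Finset α)} {S : Finset α}
    (h : ∀ T ∈ l, Disjoint S T) : Disjoint S (UU l) := by
  rw [Finset.disjoint_left]
  intro a haS haU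
  obtain ⟨T, hTl, haT⟩ := mem_UU.mp haU
  exact (Finset.disjoint_left.mp (h T hTl)) haS haT

lemma UU_subset {α : Type*} [DecidableEq α] {l : List (Finset α)} {T : Finset α}
    (h : T ∈ l) : T ⊆ UU l := fun a ha => mem_UU.mpr ⟨T, h, ha⟩

lemma card_UU {α : Type*} [DecidableEq α] {l : List (Finset α)} (h : l.Pairwise Disjoint) :
    (UU l).card = (l.map Finset.card).sum := by
  induction l with
  | nil => simp [UU]
  | cons T l ih =>
    rw [List.pairwise_cons] at h
    have hd : Disjoint T (UU l) := disjoint_UU h.1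
    show (T ∪ UU l).card = _
    rw [Finset.card_union_of_disjoint hd, ih h.2]
    simp

lemma UU_append {α : Type*} [DecidableEq α] (l₁ l₂ : List (Finset α)) :
    UU (l₁ ++ l₂) = UU l₁ ∪ UU l₂ := by
  induction l₁ with
  | nil => simp [UU]
  | cons T l ih =>
    show T ∪ UU (l ++ l₂) = (T ∪ UU l) ∪ UU l₂
    rw [ih, Finset.union_assoc]

/-- Chunk a single finset into pieces of size `q` plus a remainder of size `< q`. -/
lemma chunkOne {α : Type*} [DecidableEq α] (q : ℕ) (hq : 0 < q) (S : Finset α) :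
    ∃ (L : List (Finset α)) (R : Finset α),
      (∀ T ∈ L, T.card = q ∧ T ⊆ S) ∧ (R :: L).Pairwise Disjoint ∧
      R ∪ UU L = S ∧ R.card < q := by
  induction S using Finset.strongInduction with
  | _ S ih =>
    by_cases hS : S.card < q
    · exact ⟨[], S, by simp, by simp, by simp [UU], hS⟩
    · push_neg at hS
      obtain ⟨T, hTS, hTcard⟩ := Finset.exists_subset_card_eq hS
      have hT0 : T.Nonempty := Finset.card_pos.mp (hTcard ▸ hq)
      have hss : S \ T ⊂ S := Finset.sdiff_ssubset hTS hT0
      obtain ⟨L', R', h1, h2, h3, h4⟩ := ih (S \ T) hss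
      rw [List.pairwise_cons] at h2
      have hsub : ∀ X ∈ R' :: L', X ⊆ S \ T := by
        intro X hX
        rcases List.mem_cons.mp hX with rfl | hX
        · exact h3 ▸ Finset.subset_union_left
        · exact (h1 X hX).2
      refine ⟨T :: L', R', ?_, ?_, ?_, h4⟩
      · intro X hX
        rcases List.mem_cons.mp hX with rfl | hX
        · exact ⟨hTcard, hTS⟩
        · exact ⟨(h1 X hX).1, (h1 X hX).2.trans (Finset.sdiff_subset)⟩
      · rw [List.pairwise_cons]
        constructor
        · intro X hX
          rcases List.mem_cons.mp hX with rfl | hX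
          · exact Finset.disjoint_of_subset_left (hsub R' (by simp)) Finset.sdiff_disjoint
          · exact h2.1 X hX
        · rw [List.pairwise_cons]
          refine ⟨fun X hX => ?_, h2.2⟩
          exact Finset.disjoint_of_subset_right (hsub X (by simp [hX])) Finset.sdiff_disjoint.symm
      · show R' ∪ (T ∪ UU L') = S
        rw [← Finset.union_assoc, Finset.union_comm R' T, Finset.union_assoc, h3,
          Finset.union_sdiff_of_subset hTS]

/-- Chunk a list of pairwise disjoint finsets into pieces of size `q` plus remainder. -/
lemma chunkList {α : Type*} [DecidableEq α] (q : ℕ) (hq : 0 < q) (Ps : List (Finset α))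
    (hdisj : Ps.Pairwise Disjoint) :
    ∃ (L : List (Finset α)) (R : Finset α),
      (∀ T ∈ L, T.card = q ∧ ∃ P ∈ Ps, T ⊆ P) ∧
      (R :: L).Pairwise Disjoint ∧ R ∪ UU L = UU Ps ∧ R.card ≤ Ps.length * (q - 1) := by
  induction Ps with
  | nil => exact ⟨[], ∅, by simp, by simp, by simp [UU], by simp⟩
  | cons P Ps ih =>
    rw [List.pairwise_cons] at hdisj
    obtain ⟨L₂, R₂, g1, g2, g3, g4⟩ := ih hdisj.2
    obtain ⟨L₁, R₁, h1, h2, h3, h4⟩ := chunkOne q hq P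
    rw [List.pairwise_cons] at h2 g2
    have hPU : Disjoint P (UU Ps) := disjoint_UU hdisj.1
    have hsub₁ : ∀ X ∈ R₁ :: L₁, X ⊆ P := by
      intro X hX
      rcases List.mem_cons.mp hX with rfl | hX
      · exact h3 ▸ Finset.subset_union_left
      · exact (h1 X hX).2
    have hsub₂ : ∀ X ∈ R₂ :: L₂, X ⊆ UU Ps := by
      intro X hX
      rcases List.mem_cons.mp hX with rfl | hX
      · exact g3 ▸ Finset.subset_union_left
      · obtain ⟨Q, hQ, hXQ⟩ := (g1 X hX).2
        exact hXQ.trans (UU_subset hQ)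
    have hcross : ∀ X ∈ R₁ :: L₁, ∀ Y ∈ R₂ :: L₂, Disjoint X Y := fun X hX Y hY =>
      Finset.disjoint_of_subset_left (hsub₁ X hX)
        (Finset.disjoint_of_subset_right (hsub₂ Y hY) hPU)
    refine ⟨L₁ ++ L₂, R₁ ∪ R₂, ?_, ?_, ?_, ?_⟩
    · intro T hT
      rcases List.mem_append.mp hT with hT | hT
      · exact ⟨(h1 T hT).1, P, by simp, (h1 T hT).2⟩
      · obtain ⟨Q, hQ, hTQ⟩ := (g1 T hT).2
        exact ⟨(g1 T hT).1, Q, by simp [hQ], hTQ⟩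
    · rw [List.pairwise_cons]
      constructor
      · intro T hT
        rcases List.mem_append.mp hT with hT | hT
        · exact Finset.disjoint_union_left.mpr
            ⟨h2.1 T hT, (hcross T (by simp [hT]) R₂ (by simp)).symm⟩
        · exact Finset.disjoint_union_left.mpr
            ⟨hcross R₁ (by simp) T (by simp [hT]), g2.1 T hT⟩
      · rw [List.pairwise_append]
        exact ⟨h2.2, g2.2, fun X hX Y hY => hcross X (by simp [hX]) Y (by simp [hY])⟩
    · rw [UU_append]
      show (R₁ ∪ R₂) ∪ (UU L₁ ∪ UU L₂) = P ∪ UU Ps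
      rw [← h3, ← g3]
      ext a; simp [Finset.mem_union]; tauto
    · calc (R₁ ∪ R₂).card ≤ R₁.card + R₂.card := Finset.card_union_le _ _
        _ ≤ (q - 1) + Ps.length * (q - 1) := by
            have : R₁.card ≤ q - 1 := Nat.le_sub_one_of_lt h4
            omega
        _ = (P :: Ps).length * (q - 1) := by simp [Nat.succ_mul]; ring
/-- Refine a partition into equal-size pieces of size `⌈ε·|α|/(2m')⌉` plus a small part 0. -/
lemma sideConstruction {α : Type*} [Fintype α] [Nonempty α]
    (ε : ℝ) (hε : 0 < ε) (m' : ℕ) (hm' : 1 ≤ m') (P : Fin (m'+1) → Finset α)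
    (hP : IsPartition P) :
    ∃ (m q : ℕ) (Q : Fin (m+1) → Finset α),
      0 < q ∧ IsPartition Q ∧
      (∀ i : Fin m, (Q i.succ).card = q) ∧
      (∀ i : Fin m, ∃ a : Fin m', Q i.succ ⊆ P a.succ) ∧
      (m : ℝ) * q ≤ (Fintype.card α : ℝ) ∧
      ε * (Fintype.card α : ℝ) / (2*m') ≤ (q : ℝ) ∧
      ((Q 0).card : ℝ) ≤ ((P 0).card : ℝ) + ε * (Fintype.card α : ℝ) / 2 := by
  classical
  have hcard : 0 < Fintype.card α := Fintype.card_pos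
  have hm'R : (0:ℝ) < m' := by exact_mod_cast hm'
  set x : ℝ := ε * (Fintype.card α : ℝ) / (2*m') with hx
  have hxpos : 0 < x := by positivity
  set q : ℕ := ⌈x⌉₊ with hqdef
  have hq : 0 < q := Nat.ceil_pos.mpr hxpos
  have hqlb : x ≤ (q:ℝ) := Nat.le_ceil x
  have hqub : (q:ℝ) < x + 1 := Nat.ceil_lt_add_one hxpos.le
  set Ps : List (Finset α) := List.ofFn (fun i : Fin m' => P i.succ) with hPs
  have hPsdisj : Ps.Pairwise Disjoint := by
    rw [hPs, List.pairwise_ofFn]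
    intro i j hij
    exact hP.1 i.succ j.succ (by simpa using Fin.ne_of_lt hij)
  obtain ⟨L, R, h1, h2, h3, h4⟩ := chunkList q hq Ps hPsdisj
  rw [List.pairwise_cons] at h2
  refine ⟨L.length, q, Fin.cases (P 0 ∪ R) L.get, hq, ⟨?_, ?_⟩, ?_, ?_, ?_, hqlb, ?_⟩
  · -- disjointness
    intro i j hij
    have key : ∀ j' : Fin L.length, Disjoint (P 0 ∪ R) (L.get j') := by
      intro j'
      have hmem : L.get j' ∈ L := L.get_mem j'
      obtain ⟨_, Q', hQ', hsub⟩ := h1 _ hmem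
      obtain ⟨a, ha⟩ := List.mem_ofFn.mp (hPs ▸ hQ')
      refine Finset.disjoint_union_left.mpr ⟨?_, h2.1 _ hmem⟩
      exact Finset.disjoint_of_subset_right (ha ▸ hsub)
        (hP.1 0 a.succ (Fin.succ_ne_zero a).symm)
    rcases Fin.eq_zero_or_eq_succ i with rfl | ⟨i', rfl⟩ <;>
      rcases Fin.eq_zero_or_eq_succ j with rfl | ⟨j', rfl⟩
    · exact absurd rfl hij
    · simpa using key j'
    · simpa using (key i').symm
    · have hij' : i' ≠ j' := fun h => hij (by rw [h])
      simp only [Fin.cases_succ]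
      rcases lt_or_gt_of_ne hij' with h | h
      · exact List.pairwise_iff_get.mp h2.2 i' j' h
      · exact (List.pairwise_iff_get.mp h2.2 j' i' h).symm
  · -- covering
    intro a
    obtain ⟨i, hai⟩ := hP.2 a
    rcases Fin.eq_zero_or_eq_succ i with rfl | ⟨i', rfl⟩
    · exact ⟨0, by simpa using Or.inl hai⟩
    · have : a ∈ UU Ps := mem_UU.mpr ⟨P i'.succ, by rw [hPs]; exact List.mem_ofFn.mpr ⟨i', rfl⟩, hai⟩
      rw [← h3, Finset.mem_union] at this
      rcases this with hR | hL
      · exact ⟨0, by simpa using Or.inr hR⟩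
      · obtain ⟨T, hTL, haT⟩ := mem_UU.mp hL
        obtain ⟨i₀, hi₀⟩ := List.mem_iff_get.mp hTL
        exact ⟨i₀.succ, by simp only [Fin.cases_succ]; rw [hi₀]; exact haT⟩
  · -- sizes
    intro i
    simpa using (h1 _ (L.get_mem i)).1
  · -- containment
    intro i
    obtain ⟨_, Q', hQ', hsub⟩ := h1 _ (L.get_mem i)
    obtain ⟨a, ha⟩ := List.mem_ofFn.mp (hPs ▸ hQ')
    exact ⟨a, by simpa [← ha] using hsub⟩
  · -- m * q ≤ card
    have hdL : L.Pairwise Disjoint := h2.2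
    have hUL : (UU L).card = L.length * q := by
      rw [card_UU hdL]
      have : L.map Finset.card = List.replicate L.length q :=
        List.eq_replicate_iff.mpr ⟨by simp, by
          intro b hb
          obtain ⟨T, hT, rfl⟩ := List.mem_map.mp hb
          exact (h1 T hT).1⟩
      rw [this, List.sum_replicate, smul_eq_mul, mul_comm]
    have : L.length * q ≤ Fintype.card α := hUL ▸ Finset.card_le_univ (UU L)
    exact_mod_cast this
  · -- part 0 size
    simp only [Fin.cases_zero]
    have hR : (R.card : ℝ) ≤ (m' : ℝ) * ((q:ℝ) - 1) := by
      have hlen : Ps.length = m' := by simp [hPs]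
      have h4' : R.card ≤ m' * (q-1) := by rw [← hlen]; exact h4
      calc (R.card : ℝ) ≤ ((m' * (q-1) : ℕ) : ℝ) := by exact_mod_cast h4'
        _ = (m':ℝ) * ((q:ℝ) - 1) := by
            push_cast [Nat.cast_sub hq]
            ring
    have hstep : (m' : ℝ) * ((q:ℝ) - 1) ≤ ε * (Fintype.card α : ℝ) / 2 := by
      have h5 : (q:ℝ) - 1 < x := by linarith
      have := mul_le_mul_of_nonneg_left h5.le hm'R.le
      calc (m' : ℝ) * ((q:ℝ) - 1) ≤ (m':ℝ) * x := this
        _ = ε * (Fintype.card α : ℝ) / 2 := by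
            rw [hx]; field_simp
    calc ((P 0 ∪ R).card : ℝ) ≤ ((P 0).card : ℝ) + (R.card : ℝ) := by
          exact_mod_cast Finset.card_union_le (P 0) R
      _ ≤ ((P 0).card : ℝ) + ε * (Fintype.card α : ℝ) / 2 := by linarith
/-- Transfer of an almost-covering subset from a big set to a piece. -/
lemma inter_card_bound {α : Type*} [DecidableEq α] {A1 A G : Finset α}
    (hA1 : A1 ⊆ A) (hG : G ⊆ A) {γ c : ℝ}
    (hγ : (1 - γ) * (A.card : ℝ) ≤ (G.card : ℝ)) (hkey : γ * (A.card : ℝ) ≤ c) :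
    (A1.card : ℝ) - c ≤ ((A1 ∩ G).card : ℝ) := by
  have h1 : (A1 \ G).card ≤ (A \ G).card :=
    Finset.card_le_card (Finset.sdiff_subset_sdiff hA1 le_rfl)
  have h2 : (A \ G).card = A.card - G.card := Finset.card_sdiff_of_subset hG
  have h3 : (A1 ∩ G).card + (A1 \ G).card = A1.card := Finset.card_inter_add_card_sdiff A1 G
  have h4 : G.card ≤ A.card := Finset.card_le_card hG
  have h1' : ((A1 \ G).card : ℝ) ≤ ((A \ G).card : ℝ) := by exact_mod_cast h1
  have h2' : ((A \ G).card : ℝ) = (A.card : ℝ) - (G.card : ℝ) := by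
    rw [h2]; push_cast [Nat.cast_sub h4]; ring
  have h3' : ((A1 ∩ G).card : ℝ) + ((A1 \ G).card : ℝ) = (A1.card : ℝ) := by exact_mod_cast h3
  linarith

set_option maxHeartbeats 1600000 in
/-- The equipartition version of stable regularity follows from the finitary stable
regularity lemma with decay function. -/
theorem equipartition_from_stable_regularity
    (H : ∀ (k : ℕ) (δ ε : ℝ) (σ : ℕ → ℝ), 0 < δ → 0 < ε →
      (∀ n, σ n ∈ Set.Ioo (0:ℝ) 1) →
      ∃ N : ℕ, ∀ (V W : Type) [Fintype V] [Fintype W] [Nonempty V] [Nonempty W]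
        (f : V → W → ℝ), (∀ a b, f a b ∈ Set.Icc (0:ℝ) 1) → IsStable k δ f →
        ∃ (m n : ℕ) (Vp : Fin (m+1) → Finset V) (Wp : Fin (n+1) → Finset W),
          1 ≤ m ∧ 1 ≤ n ∧ m ≤ N ∧ n ≤ N ∧ IsPartition Vp ∧ IsPartition Wp ∧
          ((Vp 0).card : ℝ) ≤ ε * ((Vp 1).card : ℝ) ∧
          ((Wp 0).card : ℝ) ≤ ε * ((Wp 1).card : ℝ) ∧
          ∀ (i : Fin (m+1)) (j : Fin (n+1)), i ≠ 0 → j ≠ 0 →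
            Homog f (Vp i) (Wp j) (5*δ + ε) (σ (m*n)) (σ (m*n))) :
    ∀ (k : ℕ) (δ ε : ℝ) (σ : ℕ → ℝ), 0 < δ → 0 < ε →
      (∀ n, σ n ∈ Set.Ioo (0:ℝ) 1) →
      ∃ N : ℕ, ∀ (V W : Type) [Fintype V] [Fintype W] [Nonempty V] [Nonempty W]
        (f : V → W → ℝ), (∀ a b, f a b ∈ Set.Icc (0:ℝ) 1) → IsStable k δ f →
        ∃ (m n : ℕ) (Vp : Fin (m+1) → Finset V) (Wp : Fin (n+1) → Finset W),
          m ≤ N ∧ n ≤ N ∧ IsPartition Vp ∧ IsPartition Wp ∧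
          (∀ (i : Fin (m+1)) (j : Fin (n+1)), i ≠ 0 → j ≠ 0 →
            Homog f (Vp i) (Wp j) (5*δ + ε) (σ (m*n)) (σ (m*n))) ∧
          (∀ i j : Fin (m+1), i ≠ 0 → j ≠ 0 → (Vp i).card = (Vp j).card) ∧
          (∀ i j : Fin (n+1), i ≠ 0 → j ≠ 0 → (Wp i).card = (Wp j).card) ∧
          ((Vp 0).card : ℝ) ≤ ε * (Fintype.card V : ℝ) ∧
          ((Wp 0).card : ℝ) ≤ ε * (Fintype.card W : ℝ) := by
  intro k δ ε σ hδ hε hσ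
  have hε2 : (0:ℝ) < ε/2 := by positivity
  set M : ℕ → ℕ := fun t => ⌊2*(t:ℝ)/ε⌋₊ with hM
  set σ' : ℕ → ℝ := fun t =>
    ((Finset.range (M t * M t + 1)).inf' (by simp) σ) * (min ε 1 / (2*((t:ℝ)+1))) with hσ'
  have hσ'val : ∀ t, σ' t =
      ((Finset.range (M t * M t + 1)).inf' (by simp) σ) * (min ε 1 / (2*((t:ℝ)+1))) :=
    fun t => rfl
  have hinfpos : ∀ t, 0 < (Finset.range (M t * M t + 1)).inf' (by simp) σ := by
    intro t
    rw [Finset.lt_inf'_iff]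
    exact fun b _ => (hσ b).1
  have hinfle : ∀ t s₀, s₀ ≤ M t * M t →
      (Finset.range (M t * M t + 1)).inf' (by simp) σ ≤ σ s₀ := by
    intro t s₀ hs₀
    exact Finset.inf'_le σ (Finset.mem_range.mpr (Nat.lt_succ_of_le hs₀))
  have hσ'mem : ∀ t, σ' t ∈ Set.Ioo (0:ℝ) 1 := by
    intro t
    have hpos := hinfpos t
    have hle : (Finset.range (M t * M t + 1)).inf' (by simp) σ ≤ σ 0 := hinfle t 0 (by simp)
    have hfac0 : 0 < min ε 1 / (2*((t:ℝ)+1)) := by positivity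
    have hfac1 : min ε 1 / (2*((t:ℝ)+1)) ≤ 1/2 := by
      rw [div_le_iff₀ (by positivity)]
      have h1 : min ε 1 ≤ 1 := min_le_right _ _
      have h2 : (1:ℝ) ≤ (t:ℝ) + 1 := by
        have : (0:ℝ) ≤ (t:ℝ) := Nat.cast_nonneg t
        linarith
      calc min ε 1 ≤ 1 := h1
        _ ≤ 1/2 * (2*((t:ℝ)+1)) := by linarith
    rw [hσ'val t]
    constructor
    · positivity
    · have hb := mul_le_mul hle hfac1 hfac0.le (hσ 0).1.le
      linarith [(hσ 0).2]
  obtain ⟨N', hN'⟩ := H k δ (ε/2) σ' hδ hε2 hσ'mem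
  refine ⟨⌊2*(N':ℝ)/ε⌋₊, ?_⟩
  intro V W _ _ _ _ f hf hstab
  classical
  obtain ⟨m', n', Vp', Wp', hm'1, hn'1, hm'N, hn'N, hPV, hPW, hV0, hW0, hHom⟩ :=
    hN' V W f hf hstab
  obtain ⟨m, qV, QV, hqV, hQVpart, hQVcard, hQVsub, hmq, hqVlb, hQV0⟩ :=
    sideConstruction ε hε m' hm'1 Vp' hPV
  obtain ⟨n, qW, QW, hqW, hQWpart, hQWcard, hQWsub, hnq, hqWlb, hQW0⟩ :=
    sideConstruction ε hε n' hn'1 Wp' hPW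
  set cV := (Fintype.card V : ℝ) with hcVdef
  set cW := (Fintype.card W : ℝ) with hcWdef
  have hcV : 0 < cV := by rw [hcVdef]; exact_mod_cast Fintype.card_pos
  have hcW : 0 < cW := by rw [hcWdef]; exact_mod_cast Fintype.card_pos
  have hm'R : (1:ℝ) ≤ (m':ℝ) := by exact_mod_cast hm'1
  have hn'R : (1:ℝ) ≤ (n':ℝ) := by exact_mod_cast hn'1
  -- bound on the number of pieces
  have hbound : ∀ (p p' : ℕ) (c q : ℝ), 0 < c → (1:ℝ) ≤ p' → 0 < q →
      (p:ℝ) * q ≤ c → ε * c / (2*p') ≤ q → (p:ℝ) * ε ≤ 2*(p':ℝ) := by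
    intro p p' c q hc hp' hq hpq hqlb
    have h2p' : (0:ℝ) < 2*p' := by linarith
    have h1 : (p:ℝ) * (ε * c/(2*p')) ≤ c :=
      le_trans (mul_le_mul_of_nonneg_left hqlb (Nat.cast_nonneg p)) hpq
    have h2 : (p:ℝ) * (ε * c) ≤ c * (2*p') := by
      have h3 := mul_le_mul_of_nonneg_right h1 h2p'.le
      calc (p:ℝ)*(ε*c) = (p:ℝ) * (ε*c/(2*p')) * (2*p') := by field_simp
        _ ≤ c * (2*p') := h3
    have h4 : (p:ℝ)*ε*c ≤ 2*(p':ℝ)*c := by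
      calc (p:ℝ)*ε*c = (p:ℝ)*(ε*c) := by ring
        _ ≤ c*(2*p') := h2
        _ = 2*(p':ℝ)*c := by ring
    exact le_of_mul_le_mul_right h4 hc
  have hqVR : (0:ℝ) < qV := by exact_mod_cast hqV
  have hqWR : (0:ℝ) < qW := by exact_mod_cast hqW
  have hmε : (m:ℝ) * ε ≤ 2*(m':ℝ) := hbound m m' cV qV hcV hm'R hqVR hmq hqVlb
  have hnε : (n:ℝ) * ε ≤ 2*(n':ℝ) := hbound n n' cW qW hcW hn'R hqWR hnq hqWlb
  have hmN : m ≤ ⌊2*(N':ℝ)/ε⌋₊ := by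
    apply Nat.le_floor
    rw [le_div_iff₀ hε]
    have : (m':ℝ) ≤ N' := by exact_mod_cast hm'N
    linarith
  have hnN : n ≤ ⌊2*(N':ℝ)/ε⌋₊ := by
    apply Nat.le_floor
    rw [le_div_iff₀ hε]
    have : (n':ℝ) ≤ N' := by exact_mod_cast hn'N
    linarith
  -- decay comparison
  set t := m' * n' with htdef
  have hm't : m' ≤ t := Nat.le_mul_of_pos_right m' hn'1
  have hn't : n' ≤ t := Nat.le_mul_of_pos_left n' hm'1
  have hmnle : m * n ≤ M t * M t := by
    have hmM : m ≤ M t := by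
      apply Nat.le_floor
      rw [le_div_iff₀ hε]
      have : (m':ℝ) ≤ (t:ℝ) := by exact_mod_cast hm't
      calc (m:ℝ) * ε ≤ 2*(m':ℝ) := hmε
        _ ≤ 2*(t:ℝ) := by linarith
    have hnM : n ≤ M t := by
      apply Nat.le_floor
      rw [le_div_iff₀ hε]
      have : (n':ℝ) ≤ (t:ℝ) := by exact_mod_cast hn't
      calc (n:ℝ) * ε ≤ 2*(n':ℝ) := hnε
        _ ≤ 2*(t:ℝ) := by linarith
    exact Nat.mul_le_mul hmM hnM
  have hγ0 : 0 ≤ σ (m*n) := (hσ (m*n)).1.le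
  have hσ'pos : 0 < σ' t := (hσ'mem t).1
  have hfaceq : σ' t * (2*((t:ℝ)+1)) =
      ((Finset.range (M t * M t + 1)).inf' (by simp) σ) * min ε 1 := by
    rw [hσ'val t]
    field_simp
  have hkeyfac : σ' t * (2*((t:ℝ)+1)) ≤ σ (m*n) * ε := by
    rw [hfaceq]
    have h1 := hinfle t (m*n) hmnle
    have h2 : min ε 1 ≤ ε := min_le_left _ _
    have h3 : 0 ≤ min ε 1 := le_min hε.le zero_le_one
    exact mul_le_mul h1 h2 h3 hγ0
  -- key bound for transferring homogeneity
  have γkey : ∀ (p' : ℕ) (c q Acard : ℝ), 0 < c → (1:ℝ) ≤ p' → (p':ℝ) ≤ t → 0 < q →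
      Acard ≤ c → 0 ≤ Acard → ε * c / (2*p') ≤ q →
      σ' t * Acard ≤ σ (m*n) * q := by
    intro p' c q Acard hc hp' hp't hq hAc hA0 hqlb
    have h2p' : (0:ℝ) < 2*p' := by linarith
    have hεc : ε * c ≤ 2*(p':ℝ)*q := by
      have := mul_le_mul_of_nonneg_right hqlb h2p'.le
      calc ε * c = ε * c/(2*p') * (2*p') := by field_simp
        _ ≤ q * (2*p') := by
            exact mul_le_mul_of_nonneg_right hqlb h2p'.le
        _ = 2*(p':ℝ)*q := by ring
    have step : ε * (σ' t * Acard) ≤ ε * (σ (m*n) * q) := by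
      calc ε * (σ' t * Acard) = σ' t * (ε * Acard) := by ring
        _ ≤ σ' t * (2*(p':ℝ) * q) := by
            apply mul_le_mul_of_nonneg_left _ hσ'pos.le
            calc ε * Acard ≤ ε * c := mul_le_mul_of_nonneg_left hAc hε.le
              _ ≤ 2*(p':ℝ)*q := hεc
        _ ≤ σ' t * (2*((t:ℝ)+1) * q) := by
            apply mul_le_mul_of_nonneg_left _ hσ'pos.le
            exact mul_le_mul_of_nonneg_right (by linarith : 2*(p':ℝ) ≤ 2*((t:ℝ)+1)) hq.le
        _ = (σ' t * (2*((t:ℝ)+1))) * q := by ring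
        _ ≤ (σ (m*n) * ε) * q := mul_le_mul_of_nonneg_right hkeyfac hq.le
        _ = ε * (σ (m*n) * q) := by ring
    exact le_of_mul_le_mul_left step hε
  refine ⟨m, n, QV, QW, hmN, hnN, hQVpart, hQWpart, ?_, ?_, ?_, ?_, ?_⟩
  · -- homogeneity of pieces
    intro i j hi hj
    obtain ⟨i', rfl⟩ := (Fin.eq_zero_or_eq_succ i).resolve_left hi
    obtain ⟨j', rfl⟩ := (Fin.eq_zero_or_eq_succ j).resolve_left hj
    obtain ⟨a, hA1sub⟩ := hQVsub i'
    obtain ⟨b, hB1sub⟩ := hQWsub j'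
    obtain ⟨A', hA'A, B', hB'B, hA'c, hB'c, r, hr, s, hs, hc1, hc2⟩ :=
      hHom a.succ b.succ (Fin.succ_ne_zero a) (Fin.succ_ne_zero b)
    have hA1card : ((QV i'.succ).card : ℝ) = qV := by exact_mod_cast hQVcard i'
    have hB1card : ((QW j'.succ).card : ℝ) = qW := by exact_mod_cast hQWcard j'
    have hAle : ((Vp' a.succ).card : ℝ) ≤ cV := by
      rw [hcVdef]; exact_mod_cast Finset.card_le_univ _
    have hBle : ((Wp' b.succ).card : ℝ) ≤ cW := by
      rw [hcWdef]; exact_mod_cast Finset.card_le_univ _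
    have hm'tR : (m':ℝ) ≤ (t:ℝ) := by exact_mod_cast hm't
    have hn'tR : (n':ℝ) ≤ (t:ℝ) := by exact_mod_cast hn't
    have γkeyV : σ' t * ((Vp' a.succ).card : ℝ) ≤ σ (m*n) * qV :=
      γkey m' cV qV _ hcV hm'R hm'tR hqVR hAle (Nat.cast_nonneg _) hqVlb
    have γkeyW : σ' t * ((Wp' b.succ).card : ℝ) ≤ σ (m*n) * qW :=
      γkey n' cW qW _ hcW hn'R hn'tR hqWR hBle (Nat.cast_nonneg _) hqWlb
    refine ⟨QV i'.succ ∩ A', Finset.inter_subset_left, QW j'.succ ∩ B',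
      Finset.inter_subset_left, ?_, ?_, r, hr, s, hs, ?_, ?_⟩
    · have hic := inter_card_bound hA1sub hA'A hA'c γkeyV
      rw [hA1card]
      linarith [hic, hA1card]
    · have hic := inter_card_bound hB1sub hB'B hB'c γkeyW
      rw [hB1card]
      linarith [hic, hB1card]
    · intro b₀ hb₀
      have hb₀B' : b₀ ∈ B' := (Finset.mem_inter.mp hb₀).2
      have hcc := hc1 b₀ hb₀B'
      have hGsub : (Vp' a.succ).filter (fun a₀ => |f a₀ b₀ - r| ≤ 5*δ + ε/2) ⊆ Vp' a.succ :=
        Finset.filter_subset _ _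
      have key := inter_card_bound hA1sub hGsub hcc γkeyV
      have hsub2 : QV i'.succ ∩ ((Vp' a.succ).filter (fun a₀ => |f a₀ b₀ - r| ≤ 5*δ + ε/2)) ⊆
          (QV i'.succ).filter (fun a₀ => |f a₀ b₀ - r| ≤ 5*δ + ε) := by
        intro x hx
        rw [Finset.mem_inter] at hx
        rw [Finset.mem_filter]
        have h5 := (Finset.mem_filter.mp hx.2).2
        exact ⟨hx.1, by linarith⟩
      have hmono := Finset.card_le_card hsub2
      have hmono' : ((QV i'.succ ∩ ((Vp' a.succ).filter
          (fun a₀ => |f a₀ b₀ - r| ≤ 5*δ + ε/2))).card : ℝ) ≤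
          (((QV i'.succ).filter (fun a₀ => |f a₀ b₀ - r| ≤ 5*δ + ε)).card : ℝ) := by
        exact_mod_cast hmono
      rw [hA1card] at key
      rw [hA1card]
      linarith [key, hmono']
    · intro a₀ ha₀
      have ha₀A' : a₀ ∈ A' := (Finset.mem_inter.mp ha₀).2
      have hcc := hc2 a₀ ha₀A'
      have hGsub : (Wp' b.succ).filter (fun b₁ => |f a₀ b₁ - s| ≤ 5*δ + ε/2) ⊆ Wp' b.succ :=
        Finset.filter_subset _ _
      have key := inter_card_bound hB1sub hGsub hcc γkeyW
      have hsub2 : QW j'.succ ∩ ((Wp' b.succ).filter (fun b₁ => |f a₀ b₁ - s| ≤ 5*δ + ε/2)) ⊆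
          (QW j'.succ).filter (fun b₁ => |f a₀ b₁ - s| ≤ 5*δ + ε) := by
        intro x hx
        rw [Finset.mem_inter] at hx
        rw [Finset.mem_filter]
        have h5 := (Finset.mem_filter.mp hx.2).2
        exact ⟨hx.1, by linarith⟩
      have hmono := Finset.card_le_card hsub2
      have hmono' : ((QW j'.succ ∩ ((Wp' b.succ).filter
          (fun b₁ => |f a₀ b₁ - s| ≤ 5*δ + ε/2))).card : ℝ) ≤
          (((QW j'.succ).filter (fun b₁ => |f a₀ b₁ - s| ≤ 5*δ + ε)).card : ℝ) := by
        exact_mod_cast hmono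
      rw [hB1card] at key
      rw [hB1card]
      linarith [key, hmono']
  · -- equal sizes V
    intro i j hi hj
    obtain ⟨i', rfl⟩ := (Fin.eq_zero_or_eq_succ i).resolve_left hi
    obtain ⟨j', rfl⟩ := (Fin.eq_zero_or_eq_succ j).resolve_left hj
    rw [hQVcard i', hQVcard j']
  · -- equal sizes W
    intro i j hi hj
    obtain ⟨i', rfl⟩ := (Fin.eq_zero_or_eq_succ i).resolve_left hi
    obtain ⟨j', rfl⟩ := (Fin.eq_zero_or_eq_succ j).resolve_left hj
    rw [hQWcard i', hQWcard j']
  · -- small part V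
    have h1 : ((Vp' 0).card : ℝ) ≤ ε/2 * ((Vp' 1).card : ℝ) := hV0
    have h2 : ((Vp' 1).card : ℝ) ≤ cV := by
      rw [hcVdef]; exact_mod_cast Finset.card_le_univ _
    have h3 : (0:ℝ) ≤ ((Vp' 1).card : ℝ) := Nat.cast_nonneg _
    have h4 : ε/2 * ((Vp' 1).card : ℝ) ≤ ε/2 * cV :=
      mul_le_mul_of_nonneg_left h2 (by positivity)
    calc ((QV 0).card : ℝ) ≤ ((Vp' 0).card : ℝ) + ε * cV / 2 := hQV0
      _ ≤ ε * cV := by linarith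
  · -- small part W
    have h1 : ((Wp' 0).card : ℝ) ≤ ε/2 * ((Wp' 1).card : ℝ) := hW0
    have h2 : ((Wp' 1).card : ℝ) ≤ cW := by
      rw [hcWdef]; exact_mod_cast Finset.card_le_univ _
    have h3 : (0:ℝ) ≤ ((Wp' 1).card : ℝ) := Nat.cast_nonneg _
    have h4 : ε/2 * ((Wp' 1).card : ℝ) ≤ ε/2 * cW :=
      mul_le_mul_of_nonneg_left h2 (by positivity)
    calc ((QW 0).card : ℝ) ≤ ((Wp' 0).card : ℝ) + ε * cW / 2 := hQW0
      _ ≤ ε * cW := by linarith
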